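/- arXiv:2308.14864 — 2 statements merged into one kernel-verified Lean document; each statement's English description precedes it below -/
import Mathlib

section
/- In the state space model with fixed observations, define the twisted unnormalized targets γ_t(x_{1:t}) = Γ_t(x_{1:t}) · L_t(x_t) for 1 ≤ t ≤ T (the filtering prefix density multiplied by the optimal twist, i.e. the lookahead function). Then for every t with 1 ≤ t ≤ T, the normalizing constant of the twisted target equals the marginal likelihood: ∫_{E^t} γ_t(x_{1:t}) dμ^{⊗t}(x_{1:t}) = Z (an identity in [0,∞]). Consequently, when 0 < Z < ∞, the normalized twisted target γ_t/Z is exactly the posterior density of the latent prefix x_{1:t} given the full observation sequence y_{1:T}. -/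
open MeasureTheory ENNReal

/-- The unnormalized filtering prefix density `Γ_{k+1}` of a state space model with fixed
observations: latents are 0-based, the prefix has `k+1` latents, `m1 x₁` represents
`p(x₁) p(y₁ | x₁)` and `mstep s x x'` represents `p(x_{s+1} | x_s) p(y_{s+1} | x_{s+1})`
evaluated at `(x, x')` (0-based transition index `s`). -/
noncomputable def prefDen {E : Type*} (m1 : E → ℝ≥0∞) (mstep : ℕ → E → E → ℝ≥0∞)
    (k : ℕ) (u : Fin (k+1) → E) : ℝ≥0∞ :=
  m1 (u 0) * ∏ s : Fin k, mstep (s : ℕ) (u s.castSucc) (u s.succ)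

/-- The lookahead function `L` at 0-based latent index `k` with `j` remaining latents:
`look μ mstep k j a = ∫_{E^j} ∏_{s<j} mstep (k+s) (path s) (path (s+1)) dμ^{⊗j}` where the
path starts at `a` and continues through the integration variables.  (For `j = 0` this is
the integral of the empty product over a one-point product space, i.e. `1 = L_T`.) -/
noncomputable def look {E : Type*} [MeasurableSpace E] (μ : Measure E)
    (mstep : ℕ → E → E → ℝ≥0∞) (k j : ℕ) (a : E) : ℝ≥0∞ :=
  ∫⁻ z : Fin j → E,
      ∏ s : Fin j, mstep (k + (s : ℕ)) ((Fin.cons a z : Fin (j+1) → E) s.castSucc)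
        ((Fin.cons a z : Fin (j+1) → E) s.succ)
    ∂(Measure.pi fun _ : Fin j => μ)

/-- Concatenation of a prefix of `k+1` latents with a suffix of `j` latents into a full
trajectory of `k+j+1` latents. -/
def appT {E : Type*} {k j : ℕ} (u : Fin (k+1) → E) (z : Fin j → E) :
    Fin (k+j+1) → E :=
  fun i => Fin.append u z (Fin.cast (by omega) i)

lemma appT_left {E : Type*} {k j : ℕ} (u : Fin (k+1) → E) (z : Fin j → E)
    (i : Fin (k+j+1)) (h : (i : ℕ) < k+1) : appT u z i = u ⟨i, h⟩ := by
  have : (Fin.cast (by omega : k+j+1 = k+1+j) i) = Fin.castAdd j ⟨(i : ℕ), h⟩ := by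
    ext; simp
  rw [appT, this, Fin.append_left]

lemma appT_right {E : Type*} {k j : ℕ} (u : Fin (k+1) → E) (z : Fin j → E)
    (i : Fin (k+j+1)) (t : Fin j) (h : (i : ℕ) = k + 1 + (t : ℕ)) : appT u z i = z t := by
  have : (Fin.cast (by omega : k+j+1 = k+1+j) i) = Fin.natAdd (k+1) t := by
    ext; simp [h]
  rw [appT, this, Fin.append_right]

lemma appT_at {E : Type*} {k j : ℕ} (u : Fin (k+1) → E) (z : Fin j → E)
    (i : Fin (j+1)) (m : Fin (k+j+1)) (h : (m : ℕ) = k + (i : ℕ)) :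
    appT u z m = (Fin.cons (u (Fin.last k)) z : Fin (j+1) → E) i := by
  induction i using Fin.cases with
  | zero =>
    rw [appT_left u z m (by simp at h; omega)]
    simp only [Fin.cons_zero]
    congr 1
    ext; simp at h ⊢; omega
  | succ t =>
    rw [appT_right u z m t (by simp at h ⊢; omega)]
    simp

lemma prefDen_measurable {E : Type*} [MeasurableSpace E] (m1 : E → ℝ≥0∞)
    (mstep : ℕ → E → E → ℝ≥0∞) (hm1_meas : Measurable m1)
    (hmstep_meas : ∀ s, Measurable (Function.uncurry (mstep s))) (n : ℕ) :
    Measurable (prefDen m1 mstep n) := by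
  apply Measurable.mul
  · exact hm1_meas.comp (measurable_pi_apply 0)
  · apply Finset.measurable_prod
    intro s _
    have h : Measurable fun u : Fin (n+1) → E => (u s.castSucc, u s.succ) :=
      (measurable_pi_apply _).prodMk (measurable_pi_apply _)
    exact (hmstep_meas s).comp h

lemma prefDen_ne_top {E : Type*} (m1 : E → ℝ≥0∞) (mstep : ℕ → E → E → ℝ≥0∞)
    (hm1_fin : ∀ x, m1 x ≠ ∞) (hmstep_fin : ∀ s x x', mstep s x x' ≠ ∞)
    (n : ℕ) (u : Fin (n+1) → E) : prefDen m1 mstep n u ≠ ∞ :=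
  ENNReal.mul_ne_top (hm1_fin _) (ENNReal.prod_ne_top fun _ _ => hmstep_fin _ _ _)

lemma key_pointwise {E : Type*} [MeasurableSpace E] (μ : Measure E)
    (m1 : E → ℝ≥0∞) (mstep : ℕ → E → E → ℝ≥0∞)
    (hm1_fin : ∀ x, m1 x ≠ ∞) (hmstep_fin : ∀ s x x', mstep s x x' ≠ ∞)
    (k j : ℕ) (u : Fin (k+1) → E) :
    prefDen m1 mstep k u * look μ mstep k j (u (Fin.last k))
      = ∫⁻ z : Fin j → E, prefDen m1 mstep (k+j) (appT u z)
          ∂(Measure.pi fun _ : Fin j => μ) := by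
  rw [look, ← lintegral_const_mul' _ _ (prefDen_ne_top m1 mstep hm1_fin hmstep_fin k u)]
  refine lintegral_congr fun z => ?_
  rw [prefDen, prefDen, Fin.prod_univ_add
    (fun s : Fin (k+j) => mstep (s : ℕ) (appT u z s.castSucc) (appT u z s.succ))]
  have h0 : appT u z 0 = u 0 := by
    rw [appT_left u z 0 (by simp)]
    exact congrArg u (Fin.ext (by simp))
  have h1 : ∀ s : Fin k,
      mstep ((Fin.castAdd j s : Fin (k+j)) : ℕ)
        (appT u z (Fin.castAdd j s).castSucc) (appT u z (Fin.castAdd j s).succ)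
      = mstep (s : ℕ) (u s.castSucc) (u s.succ) := by
    intro s
    rw [appT_left u z _ (by simp), appT_left u z _ (by simp)]
    rfl
  have h2 : ∀ s : Fin j,
      mstep ((Fin.natAdd k s : Fin (k+j)) : ℕ)
        (appT u z (Fin.natAdd k s).castSucc) (appT u z (Fin.natAdd k s).succ)
      = mstep (k + (s : ℕ)) ((Fin.cons (u (Fin.last k)) z : Fin (j+1) → E) s.castSucc)
        ((Fin.cons (u (Fin.last k)) z : Fin (j+1) → E) s.succ) := by
    intro s
    rw [appT_at u z s.castSucc _ (by simp), appT_at u z s.succ _ (by simp; omega)]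
    rfl
  simp only [h1, h2, h0]
  ring


/-- **Normalization of the twisted targets.** In a state space model with fixed
observations, the twisted unnormalized target `γ_t(x_{1:t}) = Γ_t(x_{1:t}) · L_t(x_t)`
(filtering prefix density times the optimal twist, i.e. the lookahead function) has
normalizing constant equal to the marginal likelihood `Z` for every `1 ≤ t ≤ T` (here
`t = k+1` and `T = k+1+j` with `j ≥ 0`).  Consequently, when `0 < Z < ∞`, the normalized
twisted target `γ_t / Z` is exactly the posterior density of the latent prefix `x_{1:t}`
given the full observation sequence, i.e. the marginal over the future latents of `Γ_T / Z`. -/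
theorem twisted_target_normalization
    {E : Type*} [MeasurableSpace E] (μ : Measure E) [SigmaFinite μ]
    (m1 : E → ℝ≥0∞) (mstep : ℕ → E → E → ℝ≥0∞)
    (hm1_meas : Measurable m1) (hm1_fin : ∀ x, m1 x ≠ ∞)
    (hmstep_meas : ∀ s, Measurable (Function.uncurry (mstep s)))
    (hmstep_fin : ∀ s x x', mstep s x x' ≠ ∞)
    (k j : ℕ)
    (Z : ℝ≥0∞)
    (hZ : Z = ∫⁻ x : Fin (k+j+1) → E, prefDen m1 mstep (k+j) x
      ∂(Measure.pi fun _ : Fin (k+j+1) => μ)) :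
    (∫⁻ u : Fin (k+1) → E, prefDen m1 mstep k u * look μ mstep k j (u (Fin.last k))
        ∂(Measure.pi fun _ : Fin (k+1) => μ)) = Z
    ∧ (0 < Z → Z ≠ ∞ → ∀ u : Fin (k+1) → E,
        (prefDen m1 mstep k u * look μ mstep k j (u (Fin.last k))) / Z
          = (∫⁻ z : Fin j → E, prefDen m1 mstep (k+j) (appT u z)
              ∂(Measure.pi fun _ : Fin j => μ)) / Z) := by
  have hkey := key_pointwise μ m1 mstep hm1_fin hmstep_fin k j
  constructor
  · -- Fubini via a measure-preserving splitting map
    have hφeq : (fun p : (Fin (k+1) → E) × (Fin j → E) => appT p.1 p.2)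
        = (MeasurableEquiv.piCongrLeft (fun _ : Fin (k+j+1) => E)
            (finCongr (by omega : k+1+j = k+j+1)))
          ∘ (MeasurableEquiv.piCongrLeft (fun _ : Fin (k+1+j) => E)
            (finSumFinEquiv : Fin (k+1) ⊕ Fin j ≃ Fin (k+1+j)))
          ∘ (MeasurableEquiv.sumPiEquivProdPi (fun _ : Fin (k+1) ⊕ Fin j => E)).symm := by
      funext p i
      obtain ⟨s, rfl⟩ : ∃ s : Fin (k+1) ⊕ Fin j,
          (finCongr (by omega : k+1+j = k+j+1)) (finSumFinEquiv s) = i :=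
        ⟨finSumFinEquiv.symm ((finCongr (by omega : k+1+j = k+j+1)).symm i), by simp⟩
      simp only [Function.comp_apply]
      rw [MeasurableEquiv.piCongrLeft_apply_apply]
      rw [MeasurableEquiv.piCongrLeft_apply_apply]
      rw [MeasurableEquiv.coe_sumPiEquivProdPi_symm, Equiv.sumPiEquivProdPi_symm_apply]
      cases s with
      | inl a =>
        exact (appT_left p.1 p.2 _ (by simp; exact a.is_le)).trans (congrArg p.1 (Fin.ext (by simp)))
      | inr b =>
        exact appT_right p.1 p.2 _ b (by simp)
    have hφ : MeasurePreserving (fun p : (Fin (k+1) → E) × (Fin j → E) => appT p.1 p.2)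
        ((Measure.pi fun _ : Fin (k+1) => μ).prod (Measure.pi fun _ : Fin j => μ))
        (Measure.pi fun _ : Fin (k+j+1) => μ) := by
      rw [hφeq]
      exact ((measurePreserving_piCongrLeft (fun _ : Fin (k+j+1) => μ) _).comp
        (measurePreserving_piCongrLeft (fun _ : Fin (k+1+j) => μ) _)).comp
        (measurePreserving_sumPiEquivProdPi_symm (fun _ : Fin (k+1) ⊕ Fin j => μ))
    calc (∫⁻ u : Fin (k+1) → E, prefDen m1 mstep k u * look μ mstep k j (u (Fin.last k))
        ∂(Measure.pi fun _ : Fin (k+1) => μ))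
        = ∫⁻ u : Fin (k+1) → E, ∫⁻ z : Fin j → E, prefDen m1 mstep (k+j) (appT u z)
            ∂(Measure.pi fun _ : Fin j => μ) ∂(Measure.pi fun _ : Fin (k+1) => μ) := by
          exact lintegral_congr hkey
      _ = ∫⁻ p : (Fin (k+1) → E) × (Fin j → E), prefDen m1 mstep (k+j) (appT p.1 p.2)
            ∂((Measure.pi fun _ : Fin (k+1) => μ).prod (Measure.pi fun _ : Fin j => μ)) := by
          rw [lintegral_prod]
          exact ((prefDen_measurable m1 mstep hm1_meas hmstep_meas (k+j)).comp
            hφ.measurable).aemeasurable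
      _ = ∫⁻ x : Fin (k+j+1) → E, prefDen m1 mstep (k+j) x
            ∂(Measure.pi fun _ : Fin (k+j+1) => μ) :=
          hφ.lintegral_comp (prefDen_measurable m1 mstep hm1_meas hmstep_meas (k+j))
      _ = Z := hZ.symm
  · intro _ _ u
    rw [hkey u]
end

section
/- Let μ be a σ-finite measure on a measurable space E, let a, b : E → [0,∞) be probability densities with respect to μ (∫a dμ = ∫b dμ = 1) with a(x) > 0 and b(x) > 0 for μ-a.e. x, and let ρ ∈ (0,1). Define σ(u) = 1/(1 + exp(−u)), and for measurable g : E → ℝ define the expected classification log-likelihood L(g) = ∫_E [ρ·a(x)·log(σ(g(x))) + (1−ρ)·b(x)·log(1−σ(g(x)))] dμ(x), whenever this integral is well defined (allowing the value −∞ when the negative part diverges). Define g*(x) = log(a(x)/b(x)) + log(ρ/(1−ρ)) on the set where a(x) > 0 and b(x) > 0 (and arbitrarily, say 0, elsewhere), and assume L(g*) is finite. Then for every measurable g : E → ℝ, L(g) ≤ L(g*); that is, the log density ratio shifted by the log prior odds maximizes the expected classification log-likelihood over all measurable classifiers. -/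
open MeasureTheory ENNReal

lemma dre_key {α β t : ℝ} (hα : 0 < α) (hβ : 0 < β) (ht0 : 0 < t) (ht1 : t < 1) :
    α * Real.log t + β * Real.log (1 - t) ≤
    α * Real.log (α / (α + β)) + β * Real.log (β / (α + β)) := by
  have hs : 0 < α + β := by linarith
  have e1 : Real.log t = Real.log (t * (α + β) / α) + Real.log (α / (α + β)) := by
    rw [← Real.log_mul (by positivity) (by positivity)]
    congr 1; field_simp
  have ht1' : 0 < 1 - t := by linarith
  have e2 : Real.log (1 - t) =
      Real.log ((1 - t) * (α + β) / β) + Real.log (β / (α + β)) := by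
    rw [← Real.log_mul (ne_of_gt (div_pos (mul_pos ht1' hs) hβ)) (by positivity)]
    congr 1; field_simp
  have h1 : Real.log (t * (α + β) / α) ≤ t * (α + β) / α - 1 :=
    Real.log_le_sub_one_of_pos (by positivity)
  have h2 : Real.log ((1 - t) * (α + β) / β) ≤ (1 - t) * (α + β) / β - 1 :=
    Real.log_le_sub_one_of_pos (div_pos (mul_pos ht1' hs) hβ)
  have A := mul_le_mul_of_nonneg_left h1 hα.le
  have B := mul_le_mul_of_nonneg_left h2 hβ.le
  have hz : α * (t * (α + β) / α - 1) + β * ((1 - t) * (α + β) / β - 1) = 0 := by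
    field_simp; ring
  rw [e1, e2]
  nlinarith [A, B, hz]

/-- **The shifted log density ratio maximizes the expected classification log-likelihood.**
Since `σ (g x) ∈ (0,1)`, the integrand
`ρ a x log (σ (g x)) + (1 - ρ) b x log (1 - σ (g x))` is nonpositive, so the expected
classification log-likelihood `L g` is always well defined with values in `[-∞, 0]`; we
encode it as `L g = -(N g)` where
`N g = ∫⁻ x, ENNReal.ofReal (-(ρ a x log (σ (g x)) + (1 - ρ) b x log (1 - σ (g x)))) dμ`
takes values in `[0, ∞]`.  If `g* = log (a/b) + log (ρ/(1-ρ))` where `a, b > 0` (and `0`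
elsewhere) and `L g*` is finite (`N g* < ∞`), then `L g ≤ L g*`, i.e. `N g* ≤ N g`, for
every measurable `g`. -/
theorem dre_optimal_classifier
    {E : Type*} [MeasurableSpace E] (μ : Measure E) [SigmaFinite μ]
    (a b : E → ℝ) (ha_meas : Measurable a) (hb_meas : Measurable b)
    (ha_nonneg : ∀ x, 0 ≤ a x) (hb_nonneg : ∀ x, 0 ≤ b x)
    (ha_prob : ∫ x, a x ∂μ = 1) (hb_prob : ∫ x, b x ∂μ = 1)
    (ha_pos : ∀ᵐ x ∂μ, 0 < a x) (hb_pos : ∀ᵐ x ∂μ, 0 < b x)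
    (ρ : ℝ) (hρ : ρ ∈ Set.Ioo (0 : ℝ) 1)
    (σ : ℝ → ℝ) (hσ : ∀ u, σ u = 1 / (1 + Real.exp (-u)))
    (gstar : E → ℝ)
    (hgstar : ∀ x, 0 < a x → 0 < b x →
      gstar x = Real.log (a x / b x) + Real.log (ρ / (1 - ρ)))
    (hgstar0 : ∀ x, ¬(0 < a x ∧ 0 < b x) → gstar x = 0)
    (N : (E → ℝ) → ℝ≥0∞)
    (hN : ∀ g, N g = ∫⁻ x, ENNReal.ofReal
      (-(ρ * a x * Real.log (σ (g x)) + (1 - ρ) * b x * Real.log (1 - σ (g x)))) ∂μ)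
    (hfin : N gstar < ∞) :
    ∀ g : E → ℝ, Measurable g → N gstar ≤ N g := by
  obtain ⟨hρ0, hρ1⟩ := hρ
  have hρ1' : 0 < 1 - ρ := by linarith
  have hσpos : ∀ u, 0 < σ u := fun u => by
    rw [hσ]; positivity
  have hσlt : ∀ u, σ u < 1 := fun u => by
    rw [hσ, div_lt_one (by positivity)]
    linarith [Real.exp_pos (-u)]
  intro g hg
  rw [hN, hN]
  apply lintegral_mono_ae
  filter_upwards [ha_pos, hb_pos] with x hax hbx
  apply ENNReal.ofReal_le_ofReal
  set α := ρ * a x with hαdef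
  set β := (1 - ρ) * b x with hβdef
  have hα : 0 < α := by positivity
  have hβ : 0 < β := by positivity
  have hs : 0 < α + β := by linarith
  -- compute σ (gstar x)
  have hexp : Real.exp (-(gstar x)) = β / α := by
    rw [hgstar x hax hbx, neg_add, Real.exp_add, Real.exp_neg, Real.exp_neg,
      Real.exp_log (by positivity), Real.exp_log (by positivity)]
    field_simp
    simp only [hαdef, hβdef]; ring
  have hσstar : σ (gstar x) = α / (α + β) := by
    rw [hσ, hexp]
    rw [div_eq_div_iff (by positivity) hs.ne']
    field_simp
  have h1star : (1 : ℝ) - α / (α + β) = β / (α + β) := by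
    field_simp
    ring
  have key := dre_key hα hβ (hσpos (g x)) (hσlt (g x))
  rw [hσstar, h1star]
  have : ρ * a x * Real.log (σ (g x)) + (1 - ρ) * b x * Real.log (1 - σ (g x)) ≤
      ρ * a x * Real.log (α / (α + β)) + (1 - ρ) * b x * Real.log (β / (α + β)) := by
    simpa [hαdef, hβdef] using key
  linarith
end
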